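/- For a connected vertex-transitive graph G on n vertices and any vertex u, γ(G) = n / tr(u), where tr(u) = ∑_{v ∈ V(G)} d(u,v) is the transmission of u. -/

import Mathlib

open Finset SimpleGraph

/-- `max_{uv ∈ E(G)} |x_u - x_v|` (as a real supremum over adjacent pairs). -/
noncomputable def edgeSup {V : Type*} (G : SimpleGraph V) (x : V → ℝ) : ℝ :=
  ⨆ p : {p : V × V // G.Adj p.1 p.2}, |x p.1.1 - x p.1.2|

/-- The `l_∞`-smoothing parameter `γ(G)`. -/
noncomputable def gamma {V : Type*} [Fintype V] (G : SimpleGraph V) : ℝ :=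
  sInf {y | ∃ x : V → ℝ, (∑ v, x v) = 0 ∧ (⨆ v, |x v|) = 1 ∧ y = edgeSup G x}

/-- Transmission of a vertex: sum of graph distances to all vertices. -/
noncomputable def transmission {V : Type*} [Fintype V] (G : SimpleGraph V) (u : V) : ℕ :=
  ∑ v, G.dist u v

section Aux

variable {V : Type*} [Fintype V] {G : SimpleGraph V}

omit [Fintype V] in
/-- Graph isomorphisms preserve distance. -/
lemma dist_iso (hc : G.Connected) (φ : G ≃g G) (a b : V) :
    G.dist (φ a) (φ b) = G.dist a b := by
  have key : ∀ (ψ : G ≃g G) (a b : V), G.dist (ψ a) (ψ b) ≤ G.dist a b := by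
    intro ψ a b
    obtain ⟨p, hp⟩ := hc.exists_walk_length_eq_dist a b
    calc G.dist (ψ a) (ψ b) ≤ (p.map ψ.toHom).length := SimpleGraph.dist_le _
      _ = G.dist a b := by rw [SimpleGraph.Walk.length_map, hp]
  refine le_antisymm (key φ a b) ?_
  have := key φ.symm (φ a) (φ b)
  simpa using this

lemma transmission_const (hc : G.Connected)
    (htrans : ∀ u v : V, ∃ φ : G ≃g G, φ u = v) (u w : V) :
    transmission G w = transmission G u := by
  obtain ⟨φ, hφ⟩ := htrans w u
  unfold transmission
  calc ∑ v, G.dist w v = ∑ v, G.dist (φ w) (φ v) := by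
        simp [dist_iso hc]
    _ = ∑ v, G.dist u (φ v) := by rw [hφ]
    _ = ∑ v, G.dist u v := Fintype.sum_equiv φ.toEquiv _ _ (fun v => rfl)

lemma edgeSup_bddAbove (x : V → ℝ) :
    BddAbove (Set.range fun p : {p : V × V // G.Adj p.1 p.2} => |x p.1.1 - x p.1.2|) :=
  Set.Finite.bddAbove (Set.finite_range _)

lemma abs_sub_le_edgeSup {a b : V} (x : V → ℝ) (h : G.Adj a b) :
    |x a - x b| ≤ edgeSup G x :=
  le_ciSup (edgeSup_bddAbove x) (⟨(a, b), h⟩ : {p : V × V // G.Adj p.1 p.2})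

lemma abs_sub_le_length {a b : V} (x : V → ℝ) (p : G.Walk a b) :
    |x a - x b| ≤ (p.length : ℝ) * edgeSup G x := by
  induction p with
  | nil => simp
  | @cons a c b h q ih =>
    have h1 : |x a - x c| ≤ edgeSup G x := abs_sub_le_edgeSup x h
    have h2 : |x a - x b| ≤ |x a - x c| + |x c - x b| := abs_sub_le _ _ _
    have h3 : ((SimpleGraph.Walk.cons h q).length : ℝ) = q.length + 1 := by
      rw [SimpleGraph.Walk.length_cons]; push_cast; ring
    rw [h3]
    nlinarith [ih]

lemma abs_sub_le_dist (hc : G.Connected) {a b : V} (x : V → ℝ) :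
    |x a - x b| ≤ (G.dist a b : ℝ) * edgeSup G x := by
  obtain ⟨p, hp⟩ := hc.exists_walk_length_eq_dist a b
  have := abs_sub_le_length x p
  rwa [hp] at this

/-- There is an edge incident to `u`. -/
lemma exists_neighbor (hc : G.Connected) (hn : 2 ≤ Fintype.card V) (u : V) :
    ∃ v, G.Adj u v := by
  obtain ⟨w, hw⟩ := Fintype.exists_ne_of_one_lt_card (by omega) u
  have hd : G.dist u w ≠ 0 := by
    simp [SimpleGraph.Connected.dist_eq_zero_iff hc, (Ne.symm hw)]
  obtain ⟨p, hp⟩ := SimpleGraph.exists_walk_of_dist_ne_zero hd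
  cases p with
  | nil => simp at hd
  | cons h q => exact ⟨_, h⟩

end Aux

theorem stmt1 {V : Type*} [Fintype V] (G : SimpleGraph V) (hc : G.Connected)
    (htrans : ∀ u v : V, ∃ φ : G ≃g G, φ u = v)
    (hn : 2 ≤ Fintype.card V) (u : V) :
    gamma G = (Fintype.card V : ℝ) / (transmission G u : ℝ) := by
  classical
  have hne : Nonempty V := Fintype.card_pos_iff.mp (by omega)
  set n : ℕ := Fintype.card V with hndef
  set T : ℕ := transmission G u with hTdef
  -- T > 0
  have hTpos : 0 < T := by
    obtain ⟨w, hw⟩ := Fintype.exists_ne_of_one_lt_card (by omega) u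
    have hd : 0 < G.dist u w := hc.pos_dist_of_ne (Ne.symm hw)
    calc 0 < G.dist u w := hd
      _ ≤ T := Finset.single_le_sum (f := fun v => G.dist u v)
          (fun _ _ => Nat.zero_le _) (Finset.mem_univ w)
  have hTR : (0 : ℝ) < (T : ℝ) := by exact_mod_cast hTpos
  set t : ℝ := (n : ℝ) / (T : ℝ) with htdef
  have htpos : 0 < t := div_pos (by exact_mod_cast (by omega : 0 < n)) hTR
  -- Key inequality: for any vertex v, n * d(u,v) ≤ 2 T
  have hkey : ∀ v : V, (n : ℕ) * G.dist u v ≤ 2 * T := by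
    intro v
    have h1 : ∀ w : V, G.dist u v ≤ G.dist u w + G.dist v w := by
      intro w
      calc G.dist u v ≤ G.dist u w + G.dist w v := hc.dist_triangle
        _ = G.dist u w + G.dist v w := by rw [SimpleGraph.dist_comm (G := G) (u := w) (v := v)]
    calc (n : ℕ) * G.dist u v = ∑ _w : V, G.dist u v := by
          simp [hndef, mul_comm]
      _ ≤ ∑ w : V, (G.dist u w + G.dist v w) := Finset.sum_le_sum fun w _ => h1 w
      _ = T + transmission G v := by rw [Finset.sum_add_distrib]; rfl
      _ = T + T := by rw [transmission_const hc htrans u v]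
      _ = 2 * T := by ring
  -- Lower bound: every feasible value is ≥ t
  have hlb : ∀ z ∈ {y | ∃ x : V → ℝ, (∑ v, x v) = 0 ∧ (⨆ v, |x v|) = 1 ∧ y = edgeSup G x},
      t ≤ z := by
    rintro z ⟨x, hsum, hsup, rfl⟩
    obtain ⟨w, hw⟩ := Finite.exists_max (fun v => |x v|)
    have hxw : |x w| = 1 := by
      have h1 : (⨆ v, |x v|) ≤ |x w| := ciSup_le hw
      have h2 : |x w| ≤ ⨆ v, |x v| :=
        le_ciSup (f := fun v => |x v|) (Set.Finite.bddAbove (Set.finite_range _)) w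
      rw [hsup] at h1 h2
      linarith
    have hs1 : (n : ℝ) = |∑ v, (x w - x v)| := by
      rw [Finset.sum_sub_distrib, hsum, sub_zero, Finset.sum_const, Finset.card_univ,
        nsmul_eq_mul, abs_mul, hxw, abs_of_nonneg (by positivity : (0:ℝ) ≤ (n:ℝ))]
      ring
    have hs2 : |∑ v, (x w - x v)| ≤ ∑ v, (G.dist w v : ℝ) * edgeSup G x := by
      refine le_trans (Finset.abs_sum_le_sum_abs _ _) ?_
      exact Finset.sum_le_sum fun v _ => abs_sub_le_dist hc x
    have hs3 : ∑ v, (G.dist w v : ℝ) * edgeSup G x = (T : ℝ) * edgeSup G x := by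
      rw [← Finset.sum_mul]
      congr 1
      have : transmission G w = T := transmission_const hc htrans u w
      push_cast [← this, transmission]
      rfl
    have hfin : (n : ℝ) ≤ (T : ℝ) * edgeSup G x := by
      rw [hs1]; rw [hs3] at hs2; exact hs2
    rw [htdef, div_le_iff₀ hTR]
    linarith [hfin]
  -- The optimal vector
  set y : V → ℝ := fun v => 1 - (G.dist u v : ℝ) * t with hydef
  have hysum : (∑ v, y v) = 0 := by
    have : (∑ v, ((G.dist u v : ℝ))) = (T : ℝ) := by
      rw [hTdef, transmission]; push_cast; rfl
    simp only [hydef, Finset.sum_sub_distrib, Finset.sum_const, Finset.card_univ,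
      nsmul_eq_mul, mul_one, ← Finset.sum_mul, this, htdef]
    field_simp
    simp [hndef]
  have hyabs : ∀ v, |y v| ≤ 1 := by
    intro v
    have h1 : (0 : ℝ) ≤ (G.dist u v : ℝ) * t := by positivity
    have h2 : (G.dist u v : ℝ) * t ≤ 2 := by
      have := hkey v
      have hcast : (n : ℝ) * (G.dist u v : ℝ) ≤ 2 * (T : ℝ) := by exact_mod_cast this
      rw [htdef]
      rw [mul_div_assoc']
      rw [div_le_iff₀ hTR]
      nlinarith
    rw [abs_le]; constructor <;> simp [hydef] <;> linarith
  have hysup : (⨆ v, |y v|) = 1 := by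
    have h1 : (⨆ v, |y v|) ≤ 1 := ciSup_le hyabs
    have h2 : (1 : ℝ) ≤ ⨆ v, |y v| := by
      have hu : |y u| = 1 := by simp [hydef, SimpleGraph.dist_self]
      calc (1 : ℝ) = |y u| := hu.symm
        _ ≤ ⨆ v, |y v| := le_ciSup (f := fun v => |y v|) (Set.Finite.bddAbove (Set.finite_range _)) u
    linarith
  have hyedge : edgeSup G y = t := by
    obtain ⟨v₀, hv₀⟩ := exists_neighbor hc hn u
    have hnonempty : Nonempty {p : V × V // G.Adj p.1 p.2} := ⟨⟨(u, v₀), hv₀⟩⟩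
    refine le_antisymm ?_ ?_
    · refine ciSup_le ?_
      rintro ⟨⟨a, b⟩, hab⟩
      have hd : G.dist a b = 1 := SimpleGraph.dist_eq_one_iff_adj.mpr hab
      have h1 : (G.dist u b : ℝ) ≤ (G.dist u a : ℝ) + 1 := by
        have := hc.dist_triangle (u := u) (v := a) (w := b)
        rw [hd] at this
        exact_mod_cast this
      have h2 : (G.dist u a : ℝ) ≤ (G.dist u b : ℝ) + 1 := by
        have := hc.dist_triangle (u := u) (v := b) (w := a)
        rw [SimpleGraph.dist_comm (G := G) (u := b) (v := a), hd] at this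
        exact_mod_cast this
      have : y a - y b = ((G.dist u b : ℝ) - (G.dist u a : ℝ)) * t := by
        simp only [hydef]; ring
      rw [this, abs_mul, abs_of_pos htpos]
      have habs : |(G.dist u b : ℝ) - (G.dist u a : ℝ)| ≤ 1 := by
        rw [abs_sub_le_iff]; constructor <;> linarith
      nlinarith
    · have hd : G.dist u v₀ = 1 := SimpleGraph.dist_eq_one_iff_adj.mpr hv₀
      have : |y u - y v₀| = t := by
        have h5 : y u - y v₀ = t := by
          simp [hydef, hd, SimpleGraph.dist_self]
        rw [h5, abs_of_pos htpos]
      calc t = |y u - y v₀| := this.symm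
        _ ≤ edgeSup G y := abs_sub_le_edgeSup y hv₀
  have hmem : t ∈ {y | ∃ x : V → ℝ, (∑ v, x v) = 0 ∧ (⨆ v, |x v|) = 1 ∧ y = edgeSup G x} :=
    ⟨y, hysum, hysup, hyedge.symm⟩
  rw [gamma]
  refine le_antisymm (csInf_le ⟨t, fun z hz => hlb z hz⟩ hmem) (le_csInf ⟨t, hmem⟩ hlb)
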